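/- Let H be a complex Hilbert space graded by a sequence (H_n)_{n∈ℕ} of pairwise orthogonal finite-dimensional closed subspaces whose closed linear span is H, and let M and N be graded closed subspaces of H. Writing M_n = M ∩ H_n and N_n = N ∩ H_n, one has c_e(M,N) = limsup_{n→∞} c(M_n, N_n); that is, inf{‖P_M P_N − P_{M∩N} + K‖ : K compact} = limsup_{n→∞} ‖P_{M_n} P_{N_n} − P_{M_n ∩ N_n}‖. -/

import Mathlib

/-- The orthogonal projection onto a subspace `K` of a complex inner ℂ product space,
as a bounded operator on the whole space (junk value `0` if `K` does not admit an
orthogonal projection; for a closed subspace of a Hilbert space it is the genuine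
orthogonal projection). -/
noncomputable def proj {H : Type*} [NormedAddCommGroup H] [InnerProductSpace ℂ H]
    (K : Submodule ℂ H) : H →L[ℂ] H :=
  letI := Classical.propDecidable (Submodule.HasOrthogonalProjection K)
  if h : Submodule.HasOrthogonalProjection K then
    haveI := h
    K.subtypeL.comp (Submodule.orthogonalProjectionOnto K)
  else 0

/-- The cosine of the Friedrichs angle between two (closed) subspaces `M`, `N`:
`c(M,N) = ‖P_M P_N - P_{M ∩ N}‖`. -/
noncomputable def friedrichs {H : Type*} [NormedAddCommGroup H] [InnerProductSpace ℂ H]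
    (M N : Submodule ℂ H) : ℝ :=
  ‖proj M * proj N - proj (M ⊓ N)‖

/-- The cosine of the essential Friedrichs angle between two (closed) subspaces `M`, `N`:
the infimum over compact operators `K` of `‖P_M P_N - P_{M ∩ N} + K‖`, i.e. the norm of
the class of `P_M P_N - P_{M ∩ N}` in the Calkin algebra. -/
noncomputable def essFriedrichs {H : Type*} [NormedAddCommGroup H] [InnerProductSpace ℂ H]
    (M N : Submodule ℂ H) : ℝ :=
  ⨅ K : {T : H →L[ℂ] H // IsCompactOperator ⇑T},
    ‖proj M * proj N - proj (M ⊓ N) + (K : H →L[ℂ] H)‖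

open Filter Metric

section ProjAPI

variable {H : Type*} [NormedAddCommGroup H] [InnerProductSpace ℂ H]

lemma proj_def (K : Submodule ℂ H) [h : Submodule.HasOrthogonalProjection K] :
    proj K = K.subtypeL.comp (Submodule.orthogonalProjectionOnto K) := by
  unfold proj; rw [dif_pos h]

lemma proj_apply (K : Submodule ℂ H) [Submodule.HasOrthogonalProjection K] (x : H) :
    proj K x = (Submodule.orthogonalProjectionOnto K x : H) := by rw [proj_def]; rfl

lemma proj_mem (K : Submodule ℂ H) [Submodule.HasOrthogonalProjection K] (x : H) :
    proj K x ∈ K := by rw [proj_apply]; exact Submodule.coe_mem _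

lemma proj_eq_self (K : Submodule ℂ H) [Submodule.HasOrthogonalProjection K] {x : H} (hx : x ∈ K) :
    proj K x = x := by rw [proj_apply]; exact K.starProjection_eq_self_iff.2 hx

lemma proj_eq_of (K : Submodule ℂ H) [Submodule.HasOrthogonalProjection K] {u v : H} (hv : v ∈ K)
    (h : ∀ w ∈ K, (inner ℂ (u - v) w : ℂ) = 0) : proj K u = v := by
  rw [proj_apply]; exact K.eq_starProjection_of_mem_of_inner_eq_zero hv h

lemma proj_inner (K : Submodule ℂ H) [Submodule.HasOrthogonalProjection K] (x y : H) :
    (inner ℂ (proj K x) y : ℂ) = inner ℂ x (proj K y) := by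
  rw [proj_apply, proj_apply]; exact K.inner_starProjection_left_eq_right x y

lemma sub_proj_inner (K : Submodule ℂ H) [Submodule.HasOrthogonalProjection K] (x : H) {w : H}
    (hw : w ∈ K) : (inner ℂ (x - proj K x) w : ℂ) = 0 := by
  rw [proj_apply]; exact K.starProjection_inner_eq_zero x w hw

lemma norm_proj_apply_le (K : Submodule ℂ H) [Submodule.HasOrthogonalProjection K] (x : H) :
    ‖proj K x‖ ≤ ‖x‖ := by
  rw [proj_apply]
  calc ‖(Submodule.orthogonalProjectionOnto K x : H)‖ = ‖Submodule.orthogonalProjectionOnto K x‖ := rfl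
    _ ≤ ‖Submodule.orthogonalProjectionOnto K‖ * ‖x‖ := (Submodule.orthogonalProjectionOnto K).le_opNorm x
    _ ≤ 1 * ‖x‖ := by gcongr; exact Submodule.orthogonalProjectionOnto_norm_le K
    _ = ‖x‖ := one_mul _

lemma norm_proj_le (K : Submodule ℂ H) [Submodule.HasOrthogonalProjection K] : ‖proj K‖ ≤ 1 :=
  ContinuousLinearMap.opNorm_le_bound _ zero_le_one fun x => by
    rw [one_mul]; exact norm_proj_apply_le K x

lemma proj_idem (K : Submodule ℂ H) [Submodule.HasOrthogonalProjection K] :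
    proj K * proj K = proj K := by
  ext x
  exact proj_eq_self K (proj_mem K x)

lemma inner_self_proj (K : Submodule ℂ H) [Submodule.HasOrthogonalProjection K] (x : H) :
    (inner ℂ x (proj K x) : ℂ) = (‖proj K x‖ : ℂ) ^ 2 := by
  have h1 : (inner ℂ (x - proj K x) (proj K x) : ℂ) = 0 := sub_proj_inner K x (proj_mem K x)
  rw [inner_sub_left, sub_eq_zero] at h1
  rw [h1, inner_self_eq_norm_sq_to_K]
  norm_cast

/-- Product of commuting projections is the projection onto the intersection. -/
lemma proj_mul_proj_comm (A B : Submodule ℂ H) [Submodule.HasOrthogonalProjection A]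
    [Submodule.HasOrthogonalProjection B] [Submodule.HasOrthogonalProjection (A ⊓ B)]
    (h : proj A * proj B = proj B * proj A) : proj A * proj B = proj (A ⊓ B) := by
  ext x
  show proj A (proj B x) = proj (A ⊓ B) x
  have hcomm : ∀ y, proj A (proj B y) = proj B (proj A y) := fun y => DFunLike.congr_fun h y
  refine (proj_eq_of (A ⊓ B) ?_ fun w hw => ?_).symm
  · refine ⟨proj_mem A _, ?_⟩
    rw [hcomm]; exact proj_mem B _
  · have hwA : w ∈ A := hw.1
    have hwB : w ∈ B := hw.2
    rw [inner_sub_left]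
    have h1 : (inner ℂ (proj A (proj B x)) w : ℂ) = inner ℂ (proj B x) w := by
      rw [proj_inner, proj_eq_self A hwA]
    rw [h1]
    have h2 : (inner ℂ (proj B x) w : ℂ) = inner ℂ x w := by
      rw [proj_inner, proj_eq_self B hwB]
    rw [h2, sub_self]

/-- If a self-adjoint operator maps `K` into itself, it commutes with `proj K`. -/
lemma proj_comm_of_invariant (K : Submodule ℂ H) [Submodule.HasOrthogonalProjection K] (P : H →L[ℂ] H)
    (hsa : ∀ x y, (inner ℂ (P x) y : ℂ) = inner ℂ x (P y)) (hinv : ∀ x ∈ K, P x ∈ K) :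
    proj K * P = P * proj K := by
  ext x
  show proj K (P x) = P (proj K x)
  refine proj_eq_of K (hinv _ (proj_mem K x)) fun w hw => ?_
  have : P x - P (proj K x) = P (x - proj K x) := by rw [map_sub]
  rw [this, hsa]
  exact sub_proj_inner K x (hinv w hw)

/-- Finite Pythagoras for vectors in pairwise-orthogonal subspaces. -/
lemma pythagoras_finset (V : ℕ → Submodule ℂ H)
    (hVortho : ∀ m n, m ≠ n → ∀ x ∈ V m, ∀ y ∈ V n, (inner ℂ x y : ℂ) = 0)
    (u : ℕ → H) (hu : ∀ n, u n ∈ V n) (s : Finset ℕ) :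
    ‖∑ n ∈ s, u n‖ ^ 2 = ∑ n ∈ s, ‖u n‖ ^ 2 := by
  have hfam : OrthogonalFamily ℂ (fun n => V n) (fun n => (V n).subtypeₗᵢ) :=
    fun i j hij v w => hVortho i j hij v v.2 w w.2
  have := hfam.norm_sum (fun n => (⟨u n, hu n⟩ : V n)) s
  simpa using this

/-- Finite Bessel inequality. -/
lemma bessel_finset (V : ℕ → Submodule ℂ H) [∀ n, Submodule.HasOrthogonalProjection (V n)]
    (hVortho : ∀ m n, m ≠ n → ∀ x ∈ V m, ∀ y ∈ V n, (inner ℂ x y : ℂ) = 0)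
    (x : H) (s : Finset ℕ) :
    ∑ n ∈ s, ‖proj (V n) x‖ ^ 2 ≤ ‖x‖ ^ 2 := by
  set P : ℕ → H := fun n => proj (V n) x with hP
  set v : H := ∑ n ∈ s, P n with hv
  set S : ℝ := ∑ n ∈ s, ‖P n‖ ^ 2 with hS
  have hS0 : 0 ≤ S := Finset.sum_nonneg fun n _ => sq_nonneg _
  have hnv : ‖v‖ ^ 2 = S :=
    pythagoras_finset V hVortho P (fun n => proj_mem (V n) x) s
  have hinner : (inner ℂ x v : ℂ) = (S : ℂ) := by
    rw [hv, inner_sum, hS]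
    push_cast
    refine Finset.sum_congr rfl fun n _ => ?_
    exact inner_self_proj (V n) x
  have hCS : S ≤ ‖x‖ * ‖v‖ := by
    have := norm_inner_le_norm (𝕜 := ℂ) x v
    rw [hinner] at this
    simpa [abs_of_nonneg hS0] using this
  nlinarith [norm_nonneg v, norm_nonneg x, sq_nonneg (‖v‖ - ‖x‖)]

/-- Norms of the projections of a fixed vector tend to zero. -/
lemma tendsto_norm_proj_zero (V : ℕ → Submodule ℂ H) [∀ n, Submodule.HasOrthogonalProjection (V n)]
    (hVortho : ∀ m n, m ≠ n → ∀ x ∈ V m, ∀ y ∈ V n, (inner ℂ x y : ℂ) = 0) (x : H) :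
    Tendsto (fun n => ‖proj (V n) x‖) atTop (nhds 0) := by
  have hsq : Summable fun n => ‖proj (V n) x‖ ^ 2 := by
    apply summable_of_sum_range_le (c := ‖x‖ ^ 2) (fun n => sq_nonneg _)
    intro n
    exact bessel_finset V hVortho x (Finset.range n)
  have h0 : Tendsto (fun n => ‖proj (V n) x‖ ^ 2) atTop (nhds 0) :=
    hsq.tendsto_atTop_zero
  have := h0.sqrt
  rw [Real.sqrt_zero] at this
  refine this.congr fun n => ?_
  rw [Real.sqrt_sq (norm_nonneg _)]

/-- Full orthogonal decomposition of a vector. -/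
lemma hasSum_proj [CompleteSpace H] (V : ℕ → Submodule ℂ H)
    [∀ n, Submodule.HasOrthogonalProjection (V n)]
    (hVortho : ∀ m n, m ≠ n → ∀ x ∈ V m, ∀ y ∈ V n, (inner ℂ x y : ℂ) = 0)
    (hVdense : (⨆ n, V n).topologicalClosure = ⊤) (x : H) :
    HasSum (fun n => proj (V n) x) x := by
  set P : ℕ → H := fun n => proj (V n) x with hPdef
  have hfam : OrthogonalFamily ℂ (fun n => V n) (fun n => (V n).subtypeₗᵢ) :=
    fun i j hij v w => hVortho i j hij v v.2 w w.2
  have hsq : Summable fun n => ‖P n‖ ^ 2 := by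
    apply summable_of_sum_range_le (c := ‖x‖ ^ 2) (fun n => sq_nonneg _)
    intro n
    exact bessel_finset V hVortho x (Finset.range n)
  have hsummable : Summable P := by
    have := (hfam.summable_iff_norm_sq_summable
      (fun n => (⟨P n, proj_mem (V n) x⟩ : V n))).2 (by simpa using hsq)
    simpa using this
  obtain ⟨y, hy⟩ := hsummable
  have hxy : x - y ∈ (⨆ n, V n)ᗮ := by
    rw [← Submodule.iInf_orthogonal]
    refine Submodule.mem_iInf _ |>.2 fun k => ?_
    intro u hu
    have h1 : (inner ℂ u y : ℂ) = ∑' n, (inner ℂ u (P n) : ℂ) :=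
      ((innerSL ℂ u).hasSum hy).tsum_eq.symm
    have h2 : (∑' n, (inner ℂ u (P n) : ℂ)) = inner ℂ u (P k) := by
      refine tsum_eq_single k fun n hn => ?_
      exact hVortho k n (Ne.symm hn) u hu (P n) (proj_mem (V n) x)
    have h3 : (inner ℂ u (P k) : ℂ) = inner ℂ u x := by
      rw [hPdef]
      simp only
      rw [← proj_inner, proj_eq_self (V k) hu]
    rw [inner_sub_right, h1, h2, h3, sub_self]
  rw [Submodule.topologicalClosure_eq_top_iff] at hVdense
  rw [hVdense, Submodule.mem_bot, sub_eq_zero] at hxy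
  rwa [← hxy] at hy

/-- A bounded operator with range in a finite-dimensional subspace is compact. -/
lemma isCompactOperator_of_finiteDimensional_range (W : Submodule ℂ H) [FiniteDimensional ℂ W]
    (f : H →L[ℂ] H) (hf : ∀ x, f x ∈ W) (hnorm : ∀ x, ‖f x‖ ≤ ‖x‖) :
    IsCompactOperator ⇑f := by
  refine ⟨Subtype.val '' (closedBall (0 : W) 1), ?_, ?_⟩
  · exact (ProperSpace.isCompact_closedBall _ _).image continuous_subtype_val
  · refine Filter.mem_of_superset (Metric.ball_mem_nhds 0 one_pos) ?_
    intro x hx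
    refine ⟨⟨f x, hf x⟩, ?_, rfl⟩
    simp only [Metric.mem_closedBall, dist_zero_right]
    calc ‖(⟨f x, hf x⟩ : W)‖ = ‖f x‖ := rfl
      _ ≤ ‖x‖ := hnorm x
      _ ≤ 1 := le_of_lt (by simpa [dist_zero_right] using hx)

/-- Contractions tending strongly to zero, composed with a fixed compact operator,
tend to zero in norm. -/
lemma tendsto_norm_comp_compact (P : ℕ → H →L[ℂ] H) (hPnorm : ∀ n x, ‖P n x‖ ≤ ‖x‖)
    (hPtend : ∀ c : H, Tendsto (fun n => ‖P n c‖) atTop (nhds 0))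
    (K : H →L[ℂ] H) (hK : IsCompactOperator ⇑K) :
    Tendsto (fun n => ‖(P n).comp K‖) atTop (nhds 0) := by
  obtain ⟨C, hCc, hCmem⟩ := hK
  obtain ⟨r, hr, hball⟩ := Metric.mem_nhds_iff.mp hCmem
  rw [Metric.tendsto_atTop]
  intro ε hε
  set δ : ℝ := ε * r / 8 with hδdef
  have hδ : 0 < δ := by positivity
  obtain ⟨t, htf, htcover⟩ := (Metric.totallyBounded_iff).mp hCc.totallyBounded δ hδ
  have hev : ∀ᶠ n in atTop, ∀ c ∈ t, ‖P n c‖ < δ := by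
    rw [eventually_all_finite htf]
    intro c _
    have := hPtend c
    rw [Metric.tendsto_atTop] at this
    obtain ⟨N, hN⟩ := this δ hδ
    exact eventually_atTop.2 ⟨N, fun n hn => by
      have := hN n hn
      rwa [Real.dist_eq, sub_zero, abs_of_nonneg (norm_nonneg _)] at this⟩
  rw [eventually_atTop] at hev
  obtain ⟨N, hN⟩ := hev
  refine ⟨N, fun n hn => ?_⟩
  rw [Real.dist_eq, sub_zero, abs_of_nonneg (norm_nonneg _)]
  have hbound : ∀ y ∈ C, ‖P n y‖ ≤ 2 * δ := by
    intro y hy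
    obtain ⟨c, hc, hyc⟩ := Set.mem_iUnion₂.mp (htcover hy)
    calc ‖P n y‖ = ‖P n (y - c) + P n c‖ := by rw [map_sub, sub_add_cancel]
      _ ≤ ‖P n (y - c)‖ + ‖P n c‖ := norm_add_le _ _
      _ ≤ ‖y - c‖ + ‖P n c‖ := by gcongr; exact hPnorm n _
      _ ≤ δ + δ := by
          gcongr
          · exact le_of_lt (by simpa [dist_eq_norm] using mem_ball.mp hyc)
          · exact le_of_lt (hN n hn c hc)
      _ = 2 * δ := by ring
  have hop : ‖(P n).comp K‖ ≤ ε / 2 := by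
    refine ContinuousLinearMap.opNorm_le_bound _ (by positivity) fun x => ?_
    rcases eq_or_ne x 0 with rfl | hx
    · simp
    · have hxn : (0:ℝ) < ‖x‖ := norm_pos_iff.2 hx
      set c : ℂ := ((r / (2 * ‖x‖) : ℝ) : ℂ) with hcdef
      have hcn : ‖c‖ = r / (2 * ‖x‖) := by
        rw [hcdef, Complex.norm_real, Real.norm_eq_abs, abs_of_pos (by positivity)]
      have hyball : c • x ∈ ball (0 : H) r := by
        rw [mem_ball, dist_zero_right, norm_smul, hcn]
        have h5 : r / (2 * ‖x‖) * ‖x‖ = r / 2 := by field_simp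
        rw [h5]; linarith
      have hKy : K (c • x) ∈ C := hball hyball
      have h1 : ‖P n (K (c • x))‖ ≤ 2 * δ := hbound _ hKy
      have h2 : P n (K (c • x)) = c • P n (K x) := by rw [map_smul, map_smul]
      rw [h2, norm_smul, hcn] at h1
      rw [ContinuousLinearMap.comp_apply]
      have hrx : 0 < r / (2 * ‖x‖) := by positivity
      calc ‖P n (K x)‖ = (r / (2 * ‖x‖) * ‖P n (K x)‖) / (r / (2 * ‖x‖)) := by
            field_simp
        _ ≤ (2 * δ) / (r / (2 * ‖x‖)) := by gcongr
        _ = ε / 2 * ‖x‖ := by rw [hδdef]; field_simp; ring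
  linarith

/-- Finite sums of compact operators are compact. -/
lemma isCompactOperator_sum {s : Finset ℕ} {f : ℕ → H →L[ℂ] H}
    (hf : ∀ k ∈ s, IsCompactOperator ⇑(f k)) :
    IsCompactOperator ⇑(∑ k ∈ s, f k) := by
  classical
  induction s using Finset.induction_on with
  | empty => simpa using isCompactOperator_zero
  | @insert a s' hx ih =>
      rw [Finset.sum_insert hx]
      have h1 : IsCompactOperator ⇑(f a) := hf a (Finset.mem_insert_self a s')
      have h2 : IsCompactOperator ⇑(∑ k ∈ s', f k) :=
        ih fun k hk => hf k (Finset.mem_insert_of_mem hk)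
      have h3 := h1.add h2
      have h4 : ⇑(f a + ∑ k ∈ s', f k) = ⇑(f a) + ⇑(∑ k ∈ s', f k) := rfl
      rw [h4]
      exact h3

end ProjAPI
theorem stmt7 {H : Type*} [NormedAddCommGroup H] [InnerProductSpace ℂ H] [CompleteSpace H]
    -- a grading of `H`: pairwise orthogonal finite-dimensional closed subspaces
    -- with dense linear span
    (V : ℕ → Submodule ℂ H) (hVclosed : ∀ n, IsClosed ((V n : Set H)))
    (hVfd : ∀ n, FiniteDimensional ℂ (V n))
    (hVortho : ∀ m n, m ≠ n → ∀ x ∈ V m, ∀ y ∈ V n, (inner ℂ x y : ℂ) = 0)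
    (hVdense : (⨆ n, V n).topologicalClosure = ⊤)
    -- graded closed subspaces `M` and `N`
    (M N : Submodule ℂ H) (hM : IsClosed (M : Set H)) (hN : IsClosed (N : Set H))
    (hMgraded : ∀ n, proj M * proj (V n) = proj (V n) * proj M)
    (hNgraded : ∀ n, proj N * proj (V n) = proj (V n) * proj N) :
    essFriedrichs M N =
      Filter.limsup (fun n => friedrichs (M ⊓ V n) (N ⊓ V n)) Filter.atTop := by
  classical
  haveI : ∀ n, FiniteDimensional ℂ (V n) := hVfd
  haveI : CompleteSpace M := hM.completeSpace_coe
  haveI : CompleteSpace N := hN.completeSpace_coe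
  haveI : CompleteSpace ↥(M ⊓ N) := by
    have h : IsClosed ((M ⊓ N : Submodule ℂ H) : Set H) := by
      rw [Submodule.coe_inf]; exact hM.inter hN
    exact h.completeSpace_coe
  -- gradedness of `M ⊓ N`
  have hsaP : ∀ (n : ℕ) (x y : H),
      (inner ℂ (proj (V n) x) y : ℂ) = inner ℂ x (proj (V n) y) := fun n => proj_inner (V n)
  have hMNinv : ∀ n, ∀ x ∈ M ⊓ N, proj (V n) x ∈ M ⊓ N := by
    intro n x hx
    constructor
    · have h1 : proj (V n) x = proj (V n) (proj M x) := by rw [proj_eq_self M hx.1]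
      have h2 : proj (V n) (proj M x) = proj M (proj (V n) x) := by
        have := DFunLike.congr_fun (hMgraded n) x
        exact this.symm
      rw [h1, h2]
      exact proj_mem M _
    · have h1 : proj (V n) x = proj (V n) (proj N x) := by rw [proj_eq_self N hx.2]
      have h2 : proj (V n) (proj N x) = proj N (proj (V n) x) := by
        have := DFunLike.congr_fun (hNgraded n) x
        exact this.symm
      rw [h1, h2]
      exact proj_mem N _
  have hMNgraded : ∀ n, proj (M ⊓ N) * proj (V n) = proj (V n) * proj (M ⊓ N) := fun n =>
    proj_comm_of_invariant (M ⊓ N) (proj (V n)) (hsaP n) (hMNinv n)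
  unfold essFriedrichs friedrichs
  set T : H →L[ℂ] H := proj M * proj N - proj (M ⊓ N) with hT
  -- commutation of `T` with the grading projections
  have hTP : ∀ n, T * proj (V n) = proj (V n) * T := by
    intro n
    have e1 : proj M * proj N * proj (V n) = proj (V n) * (proj M * proj N) := by
      rw [mul_assoc, hNgraded n, ← mul_assoc, hMgraded n, mul_assoc]
    calc T * proj (V n)
        = proj M * proj N * proj (V n) - proj (M ⊓ N) * proj (V n) := by rw [hT, sub_mul]
      _ = proj (V n) * (proj M * proj N) - proj (V n) * proj (M ⊓ N) := by
          rw [e1, hMNgraded n]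
      _ = proj (V n) * T := by rw [hT, mul_sub]
  -- the blocks
  have hblock : ∀ n, ‖proj (M ⊓ V n) * proj (N ⊓ V n) - proj (M ⊓ V n ⊓ (N ⊓ V n))‖
      = ‖T * proj (V n)‖ := by
    intro n
    have hMn : proj (M ⊓ V n) = proj M * proj (V n) :=
      (proj_mul_proj_comm M (V n) (hMgraded n)).symm
    have hNn : proj (N ⊓ V n) = proj N * proj (V n) :=
      (proj_mul_proj_comm N (V n) (hNgraded n)).symm
    have hinf : M ⊓ V n ⊓ (N ⊓ V n) = M ⊓ N ⊓ V n := by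
      rw [inf_inf_inf_comm, inf_idem]
    have hMNn : proj (M ⊓ V n ⊓ (N ⊓ V n)) = proj (M ⊓ N) * proj (V n) := by
      rw [hinf]
      exact (proj_mul_proj_comm (M ⊓ N) (V n) (hMNgraded n)).symm
    rw [hMn, hNn, hMNn]
    congr 1
    have e2 : proj M * proj (V n) * (proj N * proj (V n))
        = proj M * proj N * proj (V n) := by
      rw [mul_assoc (proj M), ← mul_assoc (proj (V n)), ← hNgraded n,
        mul_assoc (proj N), proj_idem (V n), ← mul_assoc]
    rw [e2, hT, sub_mul]
  have hblock' : (fun n => ‖proj (M ⊓ V n) * proj (N ⊓ V n) - proj (M ⊓ V n ⊓ (N ⊓ V n))‖)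
      = fun n => ‖T * proj (V n)‖ := funext hblock
  rw [hblock', Filter.limsup_eq]
  have ha_le : ∀ n, ‖T * proj (V n)‖ ≤ ‖T‖ := by
    intro n
    calc ‖T * proj (V n)‖ ≤ ‖T‖ * ‖proj (V n)‖ := norm_mul_le _ _
      _ ≤ ‖T‖ * 1 := by gcongr; exact norm_proj_le (V n)
      _ = ‖T‖ := mul_one _
  haveI : Nonempty {T' : H →L[ℂ] H // IsCompactOperator ⇑T'} :=
    ⟨⟨0, by exact isCompactOperator_zero⟩⟩
  have hbddR : BddBelow (Set.range fun K : {T' : H →L[ℂ] H // IsCompactOperator ⇑T'} =>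
      ‖T + (K : H →L[ℂ] H)‖) := by
    refine ⟨0, ?_⟩
    rintro y ⟨K, rfl⟩
    exact norm_nonneg _
  apply le_antisymm
  · -- essential norm ≤ limsup
    apply le_csInf
    · exact ⟨‖T‖, Filter.Eventually.of_forall ha_le⟩
    · intro c hc
      obtain ⟨m, hm⟩ := Filter.eventually_atTop.1 hc
      have hc0 : 0 ≤ c := le_trans (norm_nonneg _) (hm m le_rfl)
      set Km : H →L[ℂ] H := ∑ k ∈ Finset.range m, T * proj (V k) with hKm
      have hKmc : IsCompactOperator ⇑Km := by
        refine isCompactOperator_sum fun k _ => ?_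
        have hpc : IsCompactOperator ⇑(proj (V k)) :=
          isCompactOperator_of_finiteDimensional_range (V k) (proj (V k))
            (proj_mem (V k)) (norm_proj_apply_le (V k))
        exact hpc.clm_comp T
      have hkey : ‖T - Km‖ ≤ c := by
        refine ContinuousLinearMap.opNorm_le_bound _ hc0 fun x => ?_
        have hsum : HasSum (fun k => proj (V k) x) x := hasSum_proj V hVortho hVdense x
        have hTsum : HasSum (fun k => T (proj (V k) x)) (T x) := T.hasSum hsum
        have htend := hTsum.tendsto_sum_nat
        have htend2 : Filter.Tendsto
            (fun m' => ‖(∑ k ∈ Finset.range m', T (proj (V k) x)) - Km x‖)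
            Filter.atTop (nhds ‖T x - Km x‖) := (htend.sub tendsto_const_nhds).norm
        have hKmx : Km x = ∑ k ∈ Finset.range m, T (proj (V k) x) := by
          rw [hKm]
          simp [ContinuousLinearMap.sum_apply, ContinuousLinearMap.mul_apply]
        have hbnd : ∀ᶠ m' in Filter.atTop,
            ‖(∑ k ∈ Finset.range m', T (proj (V k) x)) - Km x‖ ≤ c * ‖x‖ := by
          filter_upwards [Filter.eventually_ge_atTop m] with m' hm'
          rw [hKmx, ← Finset.sum_Ico_eq_sub _ hm']
          have hTk : ∀ k, T (proj (V k) x) = proj (V k) (T x) := fun k =>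
            DFunLike.congr_fun (hTP k) x
          have hmem : ∀ k, T (proj (V k) x) ∈ V k := fun k =>
            (hTk k) ▸ proj_mem (V k) (T x)
          have hpyth := pythagoras_finset V hVortho _ hmem (Finset.Ico m m')
          have hterm : ∀ k ∈ Finset.Ico m m',
              ‖T (proj (V k) x)‖ ^ 2 ≤ c ^ 2 * ‖proj (V k) x‖ ^ 2 := by
            intro k hk
            have hk1 : m ≤ k := (Finset.mem_Ico.1 hk).1
            have h6 : T (proj (V k) x) = (T * proj (V k)) (proj (V k) x) := by
              show T (proj (V k) x) = T (proj (V k) (proj (V k) x))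
              rw [proj_eq_self (V k) (proj_mem (V k) x)]
            have h7 : ‖T (proj (V k) x)‖ ≤ ‖T * proj (V k)‖ * ‖proj (V k) x‖ := by
              rw [h6]
              exact (T * proj (V k)).le_opNorm _
            have h8 : ‖T * proj (V k)‖ ≤ c := hm k hk1
            have h9' : ‖T (proj (V k) x)‖ ≤ c * ‖proj (V k) x‖ :=
              h7.trans (mul_le_mul_of_nonneg_right h8 (norm_nonneg _))
            nlinarith [h9', norm_nonneg (T (proj (V k) x)), norm_nonneg (proj (V k) x),
              mul_nonneg hc0 (norm_nonneg (proj (V k) x))]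
          have hbes := bessel_finset V hVortho x (Finset.Ico m m')
          have h9 : ‖∑ k ∈ Finset.Ico m m', T (proj (V k) x)‖ ^ 2 ≤ (c * ‖x‖) ^ 2 := by
            rw [hpyth]
            calc ∑ k ∈ Finset.Ico m m', ‖T (proj (V k) x)‖ ^ 2
                ≤ ∑ k ∈ Finset.Ico m m', c ^ 2 * ‖proj (V k) x‖ ^ 2 :=
                  Finset.sum_le_sum hterm
              _ = c ^ 2 * ∑ k ∈ Finset.Ico m m', ‖proj (V k) x‖ ^ 2 := by
                  rw [Finset.mul_sum]
              _ ≤ c ^ 2 * ‖x‖ ^ 2 := by gcongr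
              _ = (c * ‖x‖) ^ 2 := by ring
          nlinarith [norm_nonneg (∑ k ∈ Finset.Ico m m', T (proj (V k) x)),
            mul_nonneg hc0 (norm_nonneg x)]
        have hfin := le_of_tendsto htend2 hbnd
        calc ‖(T - Km) x‖ = ‖T x - Km x‖ := by rw [ContinuousLinearMap.sub_apply]
          _ ≤ c * ‖x‖ := hfin
      have hKm' : IsCompactOperator ⇑(-Km) := by
        exact hKmc.neg
      calc (⨅ K : {T' : H →L[ℂ] H // IsCompactOperator ⇑T'}, ‖T + (K : H →L[ℂ] H)‖)
          ≤ ‖T + (-Km)‖ := ciInf_le hbddR ⟨-Km, hKm'⟩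
        _ = ‖T - Km‖ := by rw [← sub_eq_add_neg]
        _ ≤ c := hkey
  · -- limsup ≤ essential norm
    refine le_ciInf fun K => ?_
    obtain ⟨Kop, hKc⟩ := K
    refine le_of_forall_pos_le_add fun ε hε => ?_
    refine csInf_le ?_ ?_
    · refine ⟨0, fun c hc => ?_⟩
      obtain ⟨n, hn⟩ := hc.exists
      exact le_trans (norm_nonneg _) hn
    · show ∀ᶠ n in Filter.atTop, ‖T * proj (V n)‖ ≤ ‖T + Kop‖ + ε
      have htend := tendsto_norm_comp_compact (fun n => proj (V n))
        (fun n => norm_proj_apply_le (V n))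
        (fun cvec => tendsto_norm_proj_zero V hVortho cvec) Kop hKc
      have hev : ∀ᶠ n in Filter.atTop, ‖(proj (V n)).comp Kop‖ < ε :=
        htend.eventually (gt_mem_nhds hε)
      filter_upwards [hev] with n hn
      calc ‖T * proj (V n)‖ = ‖proj (V n) * T‖ := by rw [hTP n]
        _ = ‖proj (V n) * (T + Kop) - proj (V n) * Kop‖ := by
            rw [mul_add, add_sub_cancel_right]
        _ ≤ ‖proj (V n) * (T + Kop)‖ + ‖proj (V n) * Kop‖ := norm_sub_le _ _
        _ ≤ ‖T + Kop‖ + ε := by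
            have hp1 : ‖proj (V n) * (T + Kop)‖ ≤ ‖T + Kop‖ := by
              calc ‖proj (V n) * (T + Kop)‖ ≤ ‖proj (V n)‖ * ‖T + Kop‖ := norm_mul_le _ _
                _ ≤ 1 * ‖T + Kop‖ := by gcongr; exact norm_proj_le (V n)
                _ = ‖T + Kop‖ := one_mul _
            have hp2 : ‖proj (V n) * Kop‖ < ε := hn
            exact add_le_add hp1 (le_of_lt hp2)
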